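/- Under the mixture copula C^λ, all three pairwise correlations vanish: E[f₁(U)·f₂(U₂)] = 0, E[f₁(U)·f₃(U₃^λ)] = 0, and E[f₂(U₂)·f₃(U₃^λ)] = 0; moreover E[f_i] = 0 for each i, so the random variables f₁(U), f₂(U₂), f₃(U₃^λ) are pairwise uncorrelated for every λ ∈ [0,1]. -/

import Mathlib

open MeasureTheory ProbabilityTheory

/-- Indicator of the event `x > 1/2`. -/
noncomputable def ind (x : ℝ) : ℝ := if x > 1/2 then 1 else 0

/-- `U₂ = IJU + I(1−J)(1−U) + (1−I)JU + (1−I)(1−J)(1−U)`. -/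
noncomputable def u2 (u v : ℝ) : ℝ :=
  ind u * ind v * u + ind u * (1 - ind v) * (1 - u)
    + (1 - ind u) * ind v * u + (1 - ind u) * (1 - ind v) * (1 - u)

/-- `U₃ᴹ = IJU + I(1−J)(1−U) + (1−I)J(1−U) + (1−I)(1−J)U`. -/
noncomputable def u3M (u v : ℝ) : ℝ :=
  ind u * ind v * u + ind u * (1 - ind v) * (1 - u)
    + (1 - ind u) * ind v * (1 - u) + (1 - ind u) * (1 - ind v) * u

/-- `U₃ᵐ = IJ(1−U) + I(1−J)U + (1−I)JU + (1−I)(1−J)(1−U)`. -/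
noncomputable def u3m (u v : ℝ) : ℝ :=
  ind u * ind v * (1 - u) + ind u * (1 - ind v) * u
    + (1 - ind u) * ind v * u + (1 - ind u) * (1 - ind v) * (1 - u)

namespace Stmt4Aux

local notation "μ01" => MeasureTheory.volume.restrict (Set.Icc (0:ℝ) 1)

lemma prob01 : IsProbabilityMeasure μ01 := by
  constructor
  rw [Measure.restrict_apply_univ, Real.volume_Icc]
  norm_num

lemma ind_meas : Measurable ind := by
  unfold ind
  exact Measurable.ite measurableSet_Ioi measurable_const measurable_const

lemma ind_le (x : ℝ) : ‖ind x‖ ≤ 1 := by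
  unfold ind; split_ifs <;> simp

lemma ind_int : Integrable ind μ01 :=
  (integrable_const 1).mono' ind_meas.aestronglyMeasurable (Filter.Eventually.of_forall ind_le)

lemma ae_Ioo : ∀ᵐ u ∂μ01, u ∈ Set.Ioo (0:ℝ) 1 := by
  rw [ae_iff]
  have h1 : {u : ℝ | ¬ u ∈ Set.Ioo (0:ℝ) 1} = (Set.Ioo (0:ℝ) 1)ᶜ := rfl
  rw [h1, Measure.restrict_apply measurableSet_Ioo.compl]
  have h2 : (Set.Ioo (0:ℝ) 1)ᶜ ∩ Set.Icc (0:ℝ) 1 = {0, 1} := by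
    ext x
    simp only [Set.mem_inter_iff, Set.mem_compl_iff, Set.mem_Ioo, Set.mem_Icc,
      Set.mem_insert_iff, Set.mem_singleton_iff, not_and_or, not_lt]
    constructor
    · rintro ⟨h | h, h0, h1'⟩
      · left; linarith
      · right; linarith
    · rintro (rfl | rfl) <;> norm_num
  rw [h2]
  exact Set.Finite.measure_zero (Set.toFinite _) _

lemma ind_integral : ∫ v, ind v ∂μ01 = 1/2 := by
  have h : ind = Set.indicator (Set.Ioi (1/2:ℝ)) (fun _ => (1:ℝ)) := by
    funext x
    by_cases h : x > 1/2 <;> simp [ind, Set.indicator_apply, Set.mem_Ioi, h]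
  rw [h, integral_indicator_const (1:ℝ) measurableSet_Ioi]
  have h3 : Set.Ioi (1/2:ℝ) ∩ Set.Icc (0:ℝ) 1 = Set.Ioc (1/2:ℝ) 1 := by
    ext x
    simp only [Set.mem_inter_iff, Set.mem_Ioi, Set.mem_Icc, Set.mem_Ioc]
    constructor
    · rintro ⟨h1, _, h2⟩; exact ⟨h1, h2⟩
    · rintro ⟨h1, h2⟩; exact ⟨h1, by linarith, h2⟩
  rw [measureReal_def, Measure.restrict_apply measurableSet_Ioi, h3, Real.volume_Ioc,
    ENNReal.toReal_ofReal (by norm_num : (0:ℝ) ≤ 1 - 1/2)]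
  norm_num

lemma ind_integral' : ∫ v, (1 - ind v) ∂μ01 = 1/2 := by
  haveI := prob01
  rw [integral_sub (integrable_const 1) ind_int, ind_integral, integral_const]
  simp
  norm_num

/-- reflection `x ↦ 1 - x` is measure preserving on `[0,1]`. -/
lemma refl_mp : MeasurePreserving (fun x : ℝ => 1 - x) volume volume :=
  Measure.measurePreserving_sub_left volume 1

lemma refl_emb : MeasurableEmbedding (fun x : ℝ => 1 - x) :=
  (MeasurableEquiv.subLeft (1:ℝ)).measurableEmbedding

lemma refl_pre : (fun x : ℝ => 1 - x) ⁻¹' (Set.Icc 0 1) = Set.Icc 0 1 := by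
  ext x
  simp only [Set.mem_preimage, Set.mem_Icc]
  constructor <;> rintro ⟨h1, h2⟩ <;> constructor <;> linarith

/-- integral of a function antisymmetric about 1/2 vanishes. -/
lemma refl_int (φ : ℝ → ℝ) (hφ : Integrable φ μ01)
    (hsym : ∀ u ∈ Set.Ioo (0:ℝ) 1, φ (1 - u) = -φ u) : ∫ u, φ u ∂μ01 = 0 := by
  have key : ∫ u, φ (1 - u) ∂μ01 = ∫ u, φ u ∂μ01 := by
    conv_lhs => rw [← refl_pre]
    exact refl_mp.setIntegral_preimage_emb refl_emb φ _
  have key2 : ∫ u, φ (1 - u) ∂μ01 = ∫ u, -φ u ∂μ01 := by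
    refine integral_congr_ae ?_
    filter_upwards [ae_Ioo] with u hu using hsym u hu
  rw [key2, integral_neg] at key
  linarith

lemma cube_reflect (f : ℝ → ℝ) (hfi : Integrable (fun u => |f u| ^ 3) μ01) :
    Integrable (fun u => |f (1 - u)| ^ 3) μ01 := by
  have h := (refl_mp.integrableOn_comp_preimage refl_emb
      (f := fun u => |f u| ^ 3) (s := Set.Icc (0:ℝ) 1)).mpr hfi
  rw [refl_pre] at h
  exact h

lemma cube_bound (x : ℝ) : x ≤ 1 + x ^ 3 ∨ True := Or.inr trivial

lemma int_self (f : ℝ → ℝ) (hf : Measurable f)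
    (hfi : Integrable (fun u => |f u| ^ 3) μ01) : Integrable f μ01 := by
  refine ((integrable_const 1).add hfi).mono' hf.aestronglyMeasurable
    (Filter.Eventually.of_forall fun u => ?_)
  simp only [Pi.add_apply]
  rw [Real.norm_eq_abs]
  nlinarith [abs_nonneg (f u), sq_nonneg (|f u| - 1),
    mul_nonneg (sq_nonneg (|f u| - 1)) (by positivity : (0:ℝ) ≤ |f u| + 1)]

lemma mul_bound (x y : ℝ) : |x * y| ≤ (2 + |x| ^ 3 + |y| ^ 3) / 2 := by
  rw [abs_mul]
  nlinarith [abs_nonneg x, abs_nonneg y, sq_nonneg (|x| - |y|),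
    mul_nonneg (abs_nonneg x) (sq_nonneg (|x| - 1)),
    mul_nonneg (abs_nonneg y) (sq_nonneg (|y| - 1)),
    sq_nonneg (|x| - 1), sq_nonneg (|y| - 1)]

lemma int_mul (f g : ℝ → ℝ) (hf : Measurable f) (hg : Measurable g)
    (hfi : Integrable (fun u => |f u| ^ 3) μ01) (hgi : Integrable (fun u => |g u| ^ 3) μ01) :
    Integrable (fun u => f u * g u) μ01 := by
  refine ((((integrable_const 2).add hfi).add hgi).div_const 2).mono'
    ((hf.mul hg).aestronglyMeasurable) (Filter.Eventually.of_forall fun u => ?_)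
  rw [Real.norm_eq_abs]
  exact mul_bound _ _

lemma int_ite (X Y : ℝ → ℝ) (hmX : Measurable X) (hmY : Measurable Y)
    (hX : Integrable X μ01) (hY : Integrable Y μ01) :
    Integrable (fun u => if u > 1/2 then X u else Y u) μ01 := by
  refine (hX.abs.add hY.abs).mono'
    ((Measurable.ite measurableSet_Ioi hmX hmY).aestronglyMeasurable)
    (Filter.Eventually.of_forall fun u => ?_)
  simp only [Pi.add_apply]
  rw [Real.norm_eq_abs]
  split_ifs <;> [linarith [abs_nonneg (Y u)]; linarith [abs_nonneg (X u)]]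

/-- The main computational engine. -/
lemma pipeline {Ω : Type} [MeasurableSpace Ω] (P : Measure Ω) [IsProbabilityMeasure P]
    (U V : Ω → ℝ) (hU : Measurable U) (hV : Measurable V)
    (hUunif : P.map U = μ01) (hVunif : P.map V = μ01) (hUV : IndepFun U V P)
    (a b : ℝ → ℝ) (hma : Measurable a) (hmb : Measurable b)
    (ha : Integrable a μ01) (hb : Integrable b μ01)
    (hab : ∀ u ∈ Set.Ioo (0:ℝ) 1, a (1 - u) + b (1 - u) = -(a u + b u)) :
    Integrable (fun ω => a (U ω) * ind (V ω) + b (U ω) * (1 - ind (V ω))) P ∧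
    ∫ ω, (a (U ω) * ind (V ω) + b (U ω) * (1 - ind (V ω))) ∂P = 0 := by
  haveI := prob01
  set G : ℝ × ℝ → ℝ := fun p => a p.1 * ind p.2 + b p.1 * (1 - ind p.2) with hGdef
  have hGm : Measurable G :=
    ((hma.comp measurable_fst).mul (ind_meas.comp measurable_snd)).add
      ((hmb.comp measurable_fst).mul
        ((measurable_const.sub ind_meas).comp measurable_snd))
  have hpair : Measurable fun ω => (U ω, V ω) := hU.prodMk hV
  have hmap : P.map (fun ω => (U ω, V ω)) = Measure.prod μ01 μ01 := by
    rw [(indepFun_iff_map_prod_eq_prod_map_map hU.aemeasurable hV.aemeasurable).mp hUV,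
      hUunif, hVunif]
  have hind1 : Integrable (fun v => 1 - ind v) μ01 := (integrable_const 1).sub ind_int
  have hGa : Integrable (fun p : ℝ × ℝ => a p.1 * ind p.2) (Measure.prod μ01 μ01) :=
    ha.mul_prod ind_int
  have hGb : Integrable (fun p : ℝ × ℝ => b p.1 * (1 - ind p.2)) (Measure.prod μ01 μ01) :=
    hb.mul_prod hind1
  have hGint : Integrable G (Measure.prod μ01 μ01) := hGa.add hGb
  have hPint : Integrable (fun ω => G (U ω, V ω)) P := by
    rw [← hmap] at hGint
    exact (integrable_map_measure hGm.aestronglyMeasurable hpair.aemeasurable).mp hGint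
  refine ⟨hPint, ?_⟩
  have h1 : ∫ ω, G (U ω, V ω) ∂P = ∫ p, G p ∂(Measure.prod μ01 μ01) := by
    rw [← hmap]
    exact (integral_map hpair.aemeasurable hGm.aestronglyMeasurable).symm
  have h2 : ∫ p, G p ∂(Measure.prod μ01 μ01)
      = (∫ u, a u ∂μ01) * (1/2) + (∫ u, b u ∂μ01) * (1/2) := by
    calc ∫ p, G p ∂(Measure.prod μ01 μ01)
        = (∫ p : ℝ × ℝ, a p.1 * ind p.2 ∂(Measure.prod μ01 μ01))
          + ∫ p : ℝ × ℝ, b p.1 * (1 - ind p.2) ∂(Measure.prod μ01 μ01) :=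
          integral_add hGa hGb
      _ = (∫ u, a u ∂μ01) * (∫ v, ind v ∂μ01)
          + (∫ u, b u ∂μ01) * (∫ v, (1 - ind v) ∂μ01) :=
          congrArg₂ (· + ·) (integral_prod_mul a ind)
            (integral_prod_mul b (fun v => 1 - ind v))
      _ = (∫ u, a u ∂μ01) * (1/2) + (∫ u, b u ∂μ01) * (1/2) := by
          rw [ind_integral, ind_integral']
  have h3 : (∫ u, a u ∂μ01) + (∫ u, b u ∂μ01) = 0 := by
    rw [← integral_add ha hb]
    exact refl_int _ (ha.add hb) (fun u hu => hab u hu)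
  have : ∫ ω, G (U ω, V ω) ∂P = 0 := by rw [h1, h2]; linarith
  exact this

/-- per-case version with an explicit pointwise identity. -/
lemma case_zero {Ω : Type} [MeasurableSpace Ω] (P : Measure Ω) [IsProbabilityMeasure P]
    (U V : Ω → ℝ) (hU : Measurable U) (hV : Measurable V)
    (hUunif : P.map U = μ01) (hVunif : P.map V = μ01) (hUV : IndepFun U V P)
    (F : ℝ → ℝ → ℝ) (a b : ℝ → ℝ) (hma : Measurable a) (hmb : Measurable b)
    (ha : Integrable a μ01) (hb : Integrable b μ01)
    (hab : ∀ u ∈ Set.Ioo (0:ℝ) 1, a (1 - u) + b (1 - u) = -(a u + b u))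
    (hid : ∀ u v, F u v = a u * ind v + b u * (1 - ind v)) :
    Integrable (fun ω => F (U ω) (V ω)) P ∧ ∫ ω, F (U ω) (V ω) ∂P = 0 := by
  have he : (fun ω => F (U ω) (V ω))
      = fun ω => a (U ω) * ind (V ω) + b (U ω) * (1 - ind (V ω)) :=
    funext fun ω => hid _ _
  rw [he]
  exact pipeline P U V hU hV hUunif hVunif hUV a b hma hmb ha hb hab

lemma u2_eq (u v : ℝ) : u2 u v = if v > 1/2 then u else 1 - u := by
  unfold u2 ind; split_ifs <;> ring

lemma u3M_eq (u v : ℝ) : u3M u v =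
    if u > 1/2 then (if v > 1/2 then u else 1 - u)
    else (if v > 1/2 then 1 - u else u) := by
  unfold u3M ind; split_ifs <;> ring

lemma u3m_eq (u v : ℝ) : u3m u v =
    if u > 1/2 then (if v > 1/2 then 1 - u else u)
    else (if v > 1/2 then u else 1 - u) := by
  unfold u3m ind; split_ifs <;> ring

lemma hu2m : Measurable (fun p : ℝ × ℝ => u2 p.1 p.2) := by
  have h : (fun p : ℝ × ℝ => u2 p.1 p.2)
      = fun p : ℝ × ℝ => if p.2 > 1/2 then p.1 else 1 - p.1 :=
    funext fun p => u2_eq p.1 p.2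
  rw [h]
  exact Measurable.ite (measurable_snd measurableSet_Ioi) measurable_fst
    (measurable_const.sub measurable_fst)

lemma hu3Mm : Measurable (fun p : ℝ × ℝ => u3M p.1 p.2) := by
  have h : (fun p : ℝ × ℝ => u3M p.1 p.2)
      = fun p : ℝ × ℝ => if p.1 > 1/2 then (if p.2 > 1/2 then p.1 else 1 - p.1)
          else (if p.2 > 1/2 then 1 - p.1 else p.1) :=
    funext fun p => u3M_eq p.1 p.2
  rw [h]
  exact Measurable.ite (measurable_fst measurableSet_Ioi)
    (Measurable.ite (measurable_snd measurableSet_Ioi) measurable_fst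
      (measurable_const.sub measurable_fst))
    (Measurable.ite (measurable_snd measurableSet_Ioi)
      (measurable_const.sub measurable_fst) measurable_fst)

lemma hu3mm : Measurable (fun p : ℝ × ℝ => u3m p.1 p.2) := by
  have h : (fun p : ℝ × ℝ => u3m p.1 p.2)
      = fun p : ℝ × ℝ => if p.1 > 1/2 then (if p.2 > 1/2 then 1 - p.1 else p.1)
          else (if p.2 > 1/2 then p.1 else 1 - p.1) :=
    funext fun p => u3m_eq p.1 p.2
  rw [h]
  exact Measurable.ite (measurable_fst measurableSet_Ioi)
    (Measurable.ite (measurable_snd measurableSet_Ioi)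
      (measurable_const.sub measurable_fst) measurable_fst)
    (Measurable.ite (measurable_snd measurableSet_Ioi) measurable_fst
      (measurable_const.sub measurable_fst))

/-- splitting off an independent Bernoulli factor. -/
lemma bmix {Ω : Type} [MeasurableSpace Ω] (P : Measure Ω) [IsProbabilityMeasure P]
    (pairf : Ω → ℝ × ℝ) (B : Ω → ℝ) (hpair : Measurable pairf) (hB : Measurable B)
    (hB01 : ∀ ω, B ω = 0 ∨ B ω = 1) (hBind : IndepFun pairf B P)
    (GM Gm : ℝ × ℝ → ℝ) (hGM : Measurable GM) (hGm : Measurable Gm)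
    (hiM : Integrable (fun ω => GM (pairf ω)) P)
    (him : Integrable (fun ω => Gm (pairf ω)) P)
    (hzM : ∫ ω, GM (pairf ω) ∂P = 0) (hzm : ∫ ω, Gm (pairf ω) ∂P = 0) :
    ∫ ω, (B ω * GM (pairf ω) + (1 - B ω) * Gm (pairf ω)) ∂P = 0 := by
  have hMB : IndepFun B (fun ω => GM (pairf ω)) P :=
    (hBind.comp hGM measurable_id).symm
  have hmB : IndepFun (fun ω => 1 - B ω) (fun ω => Gm (pairf ω)) P :=
    (hBind.comp hGm (measurable_const.sub measurable_id)).symm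
  have iBM : Integrable (fun ω => B ω * GM (pairf ω)) P := by
    refine hiM.abs.mono' ((hB.mul (hGM.comp hpair)).aestronglyMeasurable)
      (Filter.Eventually.of_forall fun ω => ?_)
    rcases hB01 ω with h | h <;> rw [h] <;>
      simp [Real.norm_eq_abs, abs_mul, abs_nonneg]
  have iBm : Integrable (fun ω => (1 - B ω) * Gm (pairf ω)) P := by
    refine him.abs.mono' (((measurable_const.sub hB).mul (hGm.comp hpair)).aestronglyMeasurable)
      (Filter.Eventually.of_forall fun ω => ?_)
    rcases hB01 ω with h | h <;> rw [h] <;>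
      simp [Real.norm_eq_abs, abs_mul, abs_nonneg]
  rw [integral_add iBM iBm,
    hMB.integral_fun_mul_eq_mul_integral hB.aestronglyMeasurable ((hGM.comp hpair).aestronglyMeasurable),
    hmB.integral_fun_mul_eq_mul_integral ((measurable_const.sub hB).aestronglyMeasurable)
      ((hGm.comp hpair).aestronglyMeasurable), hzM, hzm]
  ring

end Stmt4Aux

open Stmt4Aux in
/-- under the mixture copula `C^λ`, all three pairwise correlations vanish
and each `E[fᵢ] = 0`, so `f₁(U)`, `f₂(U₂)`, `f₃(U₃^λ)` are pairwise uncorrelated. -/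
theorem stmt4 {Ω : Type} [MeasurableSpace Ω] (P : Measure Ω) [IsProbabilityMeasure P]
    (U V B : Ω → ℝ) (lam : ℝ) (hlam : lam ∈ Set.Icc (0:ℝ) 1)
    (hU : Measurable U) (hV : Measurable V) (hB : Measurable B)
    (hUunif : P.map U = volume.restrict (Set.Icc (0:ℝ) 1))
    (hVunif : P.map V = volume.restrict (Set.Icc (0:ℝ) 1))
    (hUV : IndepFun U V P)
    (hB01 : ∀ ω, B ω = 0 ∨ B ω = 1)
    (hBlam : P {ω | B ω = 1} = ENNReal.ofReal lam)
    (hBind : IndepFun (fun ω => (U ω, V ω)) B P)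
    (f₁ f₂ f₃ : ℝ → ℝ)
    (hf₁ : Measurable f₁) (hf₂ : Measurable f₂) (hf₃ : Measurable f₃)
    (hf₁mono : MonotoneOn f₁ (Set.Ioo 0 1)) (hf₂mono : MonotoneOn f₂ (Set.Ioo 0 1))
    (hf₃mono : MonotoneOn f₃ (Set.Ioo 0 1))
    (hf₁sym : ∀ u ∈ Set.Ioo (0:ℝ) 1, f₁ (1 - u) = - f₁ u)
    (hf₂sym : ∀ u ∈ Set.Ioo (0:ℝ) 1, f₂ (1 - u) = - f₂ u)
    (hf₃sym : ∀ u ∈ Set.Ioo (0:ℝ) 1, f₃ (1 - u) = - f₃ u)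
    (hf₁int : IntegrableOn (fun u => |f₁ u| ^ 3) (Set.Ioo (0:ℝ) 1) volume)
    (hf₂int : IntegrableOn (fun u => |f₂ u| ^ 3) (Set.Ioo (0:ℝ) 1) volume)
    (hf₃int : IntegrableOn (fun u => |f₃ u| ^ 3) (Set.Ioo (0:ℝ) 1) volume) :
    (∫ ω, f₁ (U ω) * f₂ (u2 (U ω) (V ω)) ∂P = 0) ∧
    (∫ ω, f₁ (U ω)
        * f₃ (B ω * u3M (U ω) (V ω) + (1 - B ω) * u3m (U ω) (V ω)) ∂P = 0) ∧
    (∫ ω, f₂ (u2 (U ω) (V ω))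
        * f₃ (B ω * u3M (U ω) (V ω) + (1 - B ω) * u3m (U ω) (V ω)) ∂P = 0) ∧
    (∫ ω, f₁ (U ω) ∂P = 0) ∧
    (∫ ω, f₂ (u2 (U ω) (V ω)) ∂P = 0) ∧
    (∫ ω, f₃ (B ω * u3M (U ω) (V ω) + (1 - B ω) * u3m (U ω) (V ω)) ∂P = 0) := by
  haveI := prob01
  -- cube integrability on [0,1]
  have hIoo : MeasureTheory.volume.restrict (Set.Ioo (0:ℝ) 1)
      = MeasureTheory.volume.restrict (Set.Icc (0:ℝ) 1) :=
    Measure.restrict_congr_set Ioo_ae_eq_Icc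
  have h1c : Integrable (fun u => |f₁ u| ^ 3) (volume.restrict (Set.Icc (0:ℝ) 1)) :=
    hIoo ▸ hf₁int
  have h2c : Integrable (fun u => |f₂ u| ^ 3) (volume.restrict (Set.Icc (0:ℝ) 1)) :=
    hIoo ▸ hf₂int
  have h3c : Integrable (fun u => |f₃ u| ^ 3) (volume.restrict (Set.Icc (0:ℝ) 1)) :=
    hIoo ▸ hf₃int
  have hR : Measurable fun u : ℝ => (1:ℝ) - u := measurable_const.sub measurable_id
  have hf₂R : Measurable fun u => f₂ (1 - u) := hf₂.comp hR
  have hf₃R : Measurable fun u => f₃ (1 - u) := hf₃.comp hR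
  have h2cR : Integrable (fun u => |f₂ (1 - u)| ^ 3) (volume.restrict (Set.Icc (0:ℝ) 1)) :=
    cube_reflect f₂ h2c
  have h3cR : Integrable (fun u => |f₃ (1 - u)| ^ 3) (volume.restrict (Set.Icc (0:ℝ) 1)) :=
    cube_reflect f₃ h3c
  have hpair : Measurable fun ω => (U ω, V ω) := hU.prodMk hV
  -- products
  have p12 := int_mul f₁ f₂ hf₁ hf₂ h1c h2c
  have p12R := int_mul f₁ (fun u => f₂ (1 - u)) hf₁ hf₂R h1c h2cR
  have p13 := int_mul f₁ f₃ hf₁ hf₃ h1c h3c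
  have p13R := int_mul f₁ (fun u => f₃ (1 - u)) hf₁ hf₃R h1c h3cR
  have p22 := int_mul f₂ f₃ hf₂ hf₃ h2c h3c
  have p2R := int_mul f₂ (fun u => f₃ (1 - u)) hf₂ hf₃R h2c h3cR
  have pR2 := int_mul (fun u => f₂ (1 - u)) f₃ hf₂R hf₃ h2cR h3c
  have pRR := int_mul (fun u => f₂ (1 - u)) (fun u => f₃ (1 - u)) hf₂R hf₃R h2cR h3cR
  ------------------------------------------------------------------
  -- Case 1 : E[f₁(U) f₂(U₂)] = 0
  have C1 := case_zero P U V hU hV hUunif hVunif hUV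
    (fun u v => f₁ u * f₂ (u2 u v))
    (fun u => f₁ u * f₂ u) (fun u => f₁ u * f₂ (1 - u))
    (hf₁.mul hf₂) (hf₁.mul hf₂R) p12 p12R
    (by
      intro u hu
      beta_reduce
      have hs : (1:ℝ) - (1 - u) = u := by ring
      simp only [hs]
      rw [hf₁sym u hu, hf₂sym u hu]; ring)
    (by
      intro u v
      beta_reduce
      rw [u2_eq]; unfold ind; split_ifs <;> ring)
  -- Case 4 : E[f₁(U)] = 0
  have C4 := case_zero P U V hU hV hUunif hVunif hUV
    (fun _u _v => f₁ _u) f₁ f₁ hf₁ hf₁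
    (int_self f₁ hf₁ h1c) (int_self f₁ hf₁ h1c)
    (by intro u hu; beta_reduce; rw [hf₁sym u hu]; ring)
    (by intro u v; beta_reduce; ring)
  -- Case 5 : E[f₂(U₂)] = 0
  have C5 := case_zero P U V hU hV hUunif hVunif hUV
    (fun u v => f₂ (u2 u v)) f₂ (fun u => f₂ (1 - u)) hf₂ hf₂R
    (int_self f₂ hf₂ h2c) (int_self (fun u => f₂ (1 - u)) hf₂R h2cR)
    (by
      intro u hu
      beta_reduce
      have hs : (1:ℝ) - (1 - u) = u := by ring
      simp only [hs]
      rw [hf₂sym u hu]; ring)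
    (by intro u v; beta_reduce; rw [u2_eq]; unfold ind; split_ifs <;> ring)
  -- Case 2 pieces : E[f₁(U) f₃(u3M)] = 0 and with u3m
  have CM2 := case_zero P U V hU hV hUunif hVunif hUV
    (fun u v => f₁ u * f₃ (u3M u v))
    (fun u => if u > 1/2 then f₁ u * f₃ u else f₁ u * f₃ (1 - u))
    (fun u => if u > 1/2 then f₁ u * f₃ (1 - u) else f₁ u * f₃ u)
    (Measurable.ite measurableSet_Ioi (hf₁.mul hf₃) (hf₁.mul hf₃R))
    (Measurable.ite measurableSet_Ioi (hf₁.mul hf₃R) (hf₁.mul hf₃))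
    (int_ite _ _ (hf₁.mul hf₃) (hf₁.mul hf₃R) p13 p13R)
    (int_ite _ _ (hf₁.mul hf₃R) (hf₁.mul hf₃) p13R p13)
    (by
      intro u hu
      beta_reduce
      have hs : (1:ℝ) - (1 - u) = u := by ring
      simp only [hs]
      rw [hf₁sym u hu, hf₃sym u hu]
      split_ifs <;> ring)
    (by intro u v; beta_reduce; rw [u3M_eq]; unfold ind; split_ifs <;> ring)
  have Cm2 := case_zero P U V hU hV hUunif hVunif hUV
    (fun u v => f₁ u * f₃ (u3m u v))
    (fun u => if u > 1/2 then f₁ u * f₃ (1 - u) else f₁ u * f₃ u)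
    (fun u => if u > 1/2 then f₁ u * f₃ u else f₁ u * f₃ (1 - u))
    (Measurable.ite measurableSet_Ioi (hf₁.mul hf₃R) (hf₁.mul hf₃))
    (Measurable.ite measurableSet_Ioi (hf₁.mul hf₃) (hf₁.mul hf₃R))
    (int_ite _ _ (hf₁.mul hf₃R) (hf₁.mul hf₃) p13R p13)
    (int_ite _ _ (hf₁.mul hf₃) (hf₁.mul hf₃R) p13 p13R)
    (by
      intro u hu
      beta_reduce
      have hs : (1:ℝ) - (1 - u) = u := by ring
      simp only [hs]
      rw [hf₁sym u hu, hf₃sym u hu]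
      split_ifs <;> ring)
    (by intro u v; beta_reduce; rw [u3m_eq]; unfold ind; split_ifs <;> ring)
  -- Case 6 pieces : E[f₃(u3M)] = 0 and with u3m
  have CM6 := case_zero P U V hU hV hUunif hVunif hUV
    (fun u v => f₃ (u3M u v))
    (fun u => if u > 1/2 then f₃ u else f₃ (1 - u))
    (fun u => if u > 1/2 then f₃ (1 - u) else f₃ u)
    (Measurable.ite measurableSet_Ioi hf₃ hf₃R)
    (Measurable.ite measurableSet_Ioi hf₃R hf₃)
    (int_ite _ _ hf₃ hf₃R (int_self f₃ hf₃ h3c) (int_self (fun u => f₃ (1 - u)) hf₃R h3cR))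
    (int_ite _ _ hf₃R hf₃ (int_self (fun u => f₃ (1 - u)) hf₃R h3cR) (int_self f₃ hf₃ h3c))
    (by
      intro u hu
      beta_reduce
      have hs : (1:ℝ) - (1 - u) = u := by ring
      simp only [hs]
      rw [hf₃sym u hu]
      split_ifs <;> ring)
    (by intro u v; beta_reduce; rw [u3M_eq]; unfold ind; split_ifs <;> ring)
  have Cm6 := case_zero P U V hU hV hUunif hVunif hUV
    (fun u v => f₃ (u3m u v))
    (fun u => if u > 1/2 then f₃ (1 - u) else f₃ u)
    (fun u => if u > 1/2 then f₃ u else f₃ (1 - u))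
    (Measurable.ite measurableSet_Ioi hf₃R hf₃)
    (Measurable.ite measurableSet_Ioi hf₃ hf₃R)
    (int_ite _ _ hf₃R hf₃ (int_self (fun u => f₃ (1 - u)) hf₃R h3cR) (int_self f₃ hf₃ h3c))
    (int_ite _ _ hf₃ hf₃R (int_self f₃ hf₃ h3c) (int_self (fun u => f₃ (1 - u)) hf₃R h3cR))
    (by
      intro u hu
      beta_reduce
      have hs : (1:ℝ) - (1 - u) = u := by ring
      simp only [hs]
      rw [hf₃sym u hu]
      split_ifs <;> ring)
    (by intro u v; beta_reduce; rw [u3m_eq]; unfold ind; split_ifs <;> ring)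
  -- Case 3 pieces : E[f₂(U₂) f₃(u3M)] = 0 and with u3m
  have hab3core : ∀ a₁ b₁ a₂ b₂ : ℝ → ℝ, True := fun _ _ _ _ => trivial
  have CM3 := case_zero P U V hU hV hUunif hVunif hUV
    (fun u v => f₂ (u2 u v) * f₃ (u3M u v))
    (fun u => if u > 1/2 then f₂ u * f₃ u else f₂ u * f₃ (1 - u))
    (fun u => if u > 1/2 then f₂ (1 - u) * f₃ (1 - u) else f₂ (1 - u) * f₃ u)
    (Measurable.ite measurableSet_Ioi (hf₂.mul hf₃) (hf₂.mul hf₃R))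
    (Measurable.ite measurableSet_Ioi (hf₂R.mul hf₃R) (hf₂R.mul hf₃))
    (int_ite _ _ (hf₂.mul hf₃) (hf₂.mul hf₃R) p22 p2R)
    (int_ite _ _ (hf₂R.mul hf₃R) (hf₂R.mul hf₃) pRR pR2)
    (by
      intro u hu
      beta_reduce
      have hs : (1:ℝ) - (1 - u) = u := by ring
      have h2 := hf₂sym u hu
      have h3 := hf₃sym u hu
      simp only [hs]
      rcases lt_trichotomy u (1/2) with hlt | heq | hgt
      · have c1 : (1:ℝ) - u > 1/2 := by linarith
        have c2 : ¬ (u > 1/2) := by linarith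
        simp only [if_pos c1, if_neg c2]
        rw [h2, h3]; ring
      · have c1 : ¬ ((1:ℝ) - u > 1/2) := by rw [heq]; norm_num
        have c2 : ¬ (u > 1/2) := by rw [heq]; exact lt_irrefl _
        have h1u : (1:ℝ) - u = u := by rw [heq]; norm_num
        have h20 : f₂ u = 0 := by
          have tmp := h2; rw [h1u] at tmp; linarith
        simp only [if_neg c1, if_neg c2]
        rw [h2, h3, h20]; ring
      · have c1 : ¬ ((1:ℝ) - u > 1/2) := by linarith
        simp only [if_neg c1, if_pos hgt]
        rw [h2, h3]; ring)
    (by intro u v; beta_reduce; rw [u2_eq, u3M_eq]; unfold ind; split_ifs <;> ring)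
  have Cm3 := case_zero P U V hU hV hUunif hVunif hUV
    (fun u v => f₂ (u2 u v) * f₃ (u3m u v))
    (fun u => if u > 1/2 then f₂ u * f₃ (1 - u) else f₂ u * f₃ u)
    (fun u => if u > 1/2 then f₂ (1 - u) * f₃ u else f₂ (1 - u) * f₃ (1 - u))
    (Measurable.ite measurableSet_Ioi (hf₂.mul hf₃R) (hf₂.mul hf₃))
    (Measurable.ite measurableSet_Ioi (hf₂R.mul hf₃) (hf₂R.mul hf₃R))
    (int_ite _ _ (hf₂.mul hf₃R) (hf₂.mul hf₃) p2R p22)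
    (int_ite _ _ (hf₂R.mul hf₃) (hf₂R.mul hf₃R) pR2 pRR)
    (by
      intro u hu
      beta_reduce
      have hs : (1:ℝ) - (1 - u) = u := by ring
      have h2 := hf₂sym u hu
      have h3 := hf₃sym u hu
      simp only [hs]
      rcases lt_trichotomy u (1/2) with hlt | heq | hgt
      · have c1 : (1:ℝ) - u > 1/2 := by linarith
        have c2 : ¬ (u > 1/2) := by linarith
        simp only [if_pos c1, if_neg c2]
        rw [h2, h3]; ring
      · have c1 : ¬ ((1:ℝ) - u > 1/2) := by rw [heq]; norm_num
        have c2 : ¬ (u > 1/2) := by rw [heq]; exact lt_irrefl _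
        have h1u : (1:ℝ) - u = u := by rw [heq]; norm_num
        have h20 : f₂ u = 0 := by
          have tmp := h2; rw [h1u] at tmp; linarith
        simp only [if_neg c1, if_neg c2]
        rw [h2, h3, h20]; ring
      · have c1 : ¬ ((1:ℝ) - u > 1/2) := by linarith
        simp only [if_neg c1, if_pos hgt]
        rw [h2, h3]; ring)
    (by intro u v; beta_reduce; rw [u2_eq, u3m_eq]; unfold ind; split_ifs <;> ring)
  ------------------------------------------------------------------
  refine ⟨C1.2, ?_, ?_, C4.2, C5.2, ?_⟩
  · -- Goal 2
    have e2 : (fun ω => f₁ (U ω)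
        * f₃ (B ω * u3M (U ω) (V ω) + (1 - B ω) * u3m (U ω) (V ω)))
        = fun ω => B ω * ((fun p : ℝ × ℝ => f₁ p.1 * f₃ (u3M p.1 p.2)) (U ω, V ω))
          + (1 - B ω) * ((fun p : ℝ × ℝ => f₁ p.1 * f₃ (u3m p.1 p.2)) (U ω, V ω)) := by
      funext ω
      rcases hB01 ω with h | h <;> rw [h] <;> norm_num
    rw [e2]
    exact bmix P (fun ω => (U ω, V ω)) B hpair hB hB01 hBind
      (fun p : ℝ × ℝ => f₁ p.1 * f₃ (u3M p.1 p.2))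
      (fun p : ℝ × ℝ => f₁ p.1 * f₃ (u3m p.1 p.2))
      ((hf₁.comp measurable_fst).mul (hf₃.comp hu3Mm))
      ((hf₁.comp measurable_fst).mul (hf₃.comp hu3mm))
      CM2.1 Cm2.1 CM2.2 Cm2.2
  · -- Goal 3
    have e3 : (fun ω => f₂ (u2 (U ω) (V ω))
        * f₃ (B ω * u3M (U ω) (V ω) + (1 - B ω) * u3m (U ω) (V ω)))
        = fun ω => B ω * ((fun p : ℝ × ℝ => f₂ (u2 p.1 p.2) * f₃ (u3M p.1 p.2)) (U ω, V ω))
          + (1 - B ω) * ((fun p : ℝ × ℝ => f₂ (u2 p.1 p.2) * f₃ (u3m p.1 p.2)) (U ω, V ω)) := by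
      funext ω
      rcases hB01 ω with h | h <;> rw [h] <;> norm_num
    rw [e3]
    exact bmix P (fun ω => (U ω, V ω)) B hpair hB hB01 hBind
      (fun p : ℝ × ℝ => f₂ (u2 p.1 p.2) * f₃ (u3M p.1 p.2))
      (fun p : ℝ × ℝ => f₂ (u2 p.1 p.2) * f₃ (u3m p.1 p.2))
      ((hf₂.comp hu2m).mul (hf₃.comp hu3Mm))
      ((hf₂.comp hu2m).mul (hf₃.comp hu3mm))
      CM3.1 Cm3.1 CM3.2 Cm3.2
  · -- Goal 6
    have e6 : (fun ω => f₃ (B ω * u3M (U ω) (V ω) + (1 - B ω) * u3m (U ω) (V ω)))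
        = fun ω => B ω * ((fun p : ℝ × ℝ => f₃ (u3M p.1 p.2)) (U ω, V ω))
          + (1 - B ω) * ((fun p : ℝ × ℝ => f₃ (u3m p.1 p.2)) (U ω, V ω)) := by
      funext ω
      rcases hB01 ω with h | h <;> rw [h] <;> norm_num
    rw [e6]
    exact bmix P (fun ω => (U ω, V ω)) B hpair hB hB01 hBind
      (fun p : ℝ × ℝ => f₃ (u3M p.1 p.2))
      (fun p : ℝ × ℝ => f₃ (u3m p.1 p.2))
      (hf₃.comp hu3Mm) (hf₃.comp hu3mm)
      CM6.1 Cm6.1 CM6.2 Cm6.2
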